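/- Fix reals a ≥ 0, g ≥ 0, σ² > 0, P_R > 0, P_Δ > 0, β > 0, Ω > 0, and set j_0 = a + P_R·g + σ², j_1 = a + (P_R + P_Δ)·g + σ², and τ_0 = −(β·P_R·(P_R + P_Δ)·Ω/P_Δ)·ln(P_R/(P_R + P_Δ)) + a + σ². Define P_E : ℝ → ℝ by P_E(τ) = 1 for τ < j_0, P_E(τ) = exp((j_0 − τ)/(β·P_R·Ω)) for j_0 ≤ τ < j_1, and P_E(τ) = 1 + exp((j_0 − τ)/(β·P_R·Ω)) − exp((j_1 − τ)/(β·(P_R + P_Δ)·Ω)) for τ ≥ j_1. Then the minimum value of P_E over ℝ equals exp((j_0 − j_1)/(β·P_R·Ω)) if j_1 ≥ τ_0, and equals 1 + exp((j_0 − τ_0)/(β·P_R·Ω)) − exp((j_1 − τ_0)/(β·(P_R + P_Δ)·Ω)) if j_1 < τ_0. -/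

import Mathlib

open Real

/-- **Corollary 1: minimum detection error probability.** With
`j₀ = a + P_R·g + σ²`, `j₁ = a + (P_R+P_Δ)·g + σ²`,
`τ₀ = −(β·P_R·(P_R+P_Δ)·Ω/P_Δ)·ln(P_R/(P_R+P_Δ)) + a + σ²` and the piecewise
detection error probability `P_E`, the minimum value of `P_E` over `ℝ` equals
`exp((j₀−j₁)/(β·P_R·Ω))` if `j₁ ≥ τ₀`, and
`1 + exp((j₀−τ₀)/(β·P_R·Ω)) − exp((j₁−τ₀)/(β·(P_R+P_Δ)·Ω))` if `j₁ < τ₀`. -/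
theorem minimum_detection_error_probability
    (a g σ2 P_R P_Δ β Ω : ℝ)
    (ha : 0 ≤ a) (hg : 0 ≤ g) (hσ : 0 < σ2)
    (hPR : 0 < P_R) (hPΔ : 0 < P_Δ) (hβ : 0 < β) (hΩ : 0 < Ω)
    (j₀ j₁ τ₀ : ℝ) (P_E : ℝ → ℝ)
    (hj₀ : j₀ = a + P_R * g + σ2)
    (hj₁ : j₁ = a + (P_R + P_Δ) * g + σ2)
    (hτ₀ : τ₀ = -(β * P_R * (P_R + P_Δ) * Ω / P_Δ) * Real.log (P_R / (P_R + P_Δ))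
        + a + σ2)
    (hPE : ∀ τ, P_E τ =
      if τ < j₀ then 1
      else if τ < j₁ then exp ((j₀ - τ) / (β * P_R * Ω))
      else 1 + exp ((j₀ - τ) / (β * P_R * Ω))
        - exp ((j₁ - τ) / (β * (P_R + P_Δ) * Ω))) :
    IsLeast (Set.range P_E)
      (if j₁ ≥ τ₀ then exp ((j₀ - j₁) / (β * P_R * Ω))
       else 1 + exp ((j₀ - τ₀) / (β * P_R * Ω))
         - exp ((j₁ - τ₀) / (β * (P_R + P_Δ) * Ω))) := by

  set c := β * P_R * Ω with hc_def
  set d := β * (P_R + P_Δ) * Ω with hd_def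
  have hc : (0:ℝ) < c := by rw [hc_def]; positivity
  have hd : (0:ℝ) < d := by rw [hd_def]; positivity
  have hsub : d - c = β * P_Δ * Ω := by rw [hc_def, hd_def]; ring
  have hdc : 0 < d - c := by rw [hsub]; positivity
  have hcd : c < d := by linarith
  have hj01 : j₀ ≤ j₁ := by rw [hj₀, hj₁]; nlinarith
  -- rewrite τ₀ in a convenient form
  have hlog : Real.log (P_R / (P_R + P_Δ)) = Real.log c - Real.log d := by
    rw [hc_def, hd_def, Real.log_div hPR.ne' (by positivity),
      Real.log_mul (by positivity) hΩ.ne', Real.log_mul hβ.ne' hPR.ne',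
      Real.log_mul (by positivity) hΩ.ne', Real.log_mul hβ.ne' (by positivity)]
    ring
  have hτ₀' : τ₀ = c * d * (Real.log d - Real.log c) / (d - c) + a + σ2 := by
    rw [hτ₀, hlog, hsub, hc_def, hd_def]
    field_simp
    ring
  -- the key linear identity
  have hdiff_id : ∀ τ : ℝ, (j₁ - τ) / d - Real.log d - ((j₀ - τ) / c - Real.log c)
      = (τ - τ₀) * (d - c) / (c * d) := by
    intro τ
    rw [hj₀, hj₁, hτ₀', hsub, hc_def, hd_def]
    field_simp
    ring
  have hsign : ∀ τ : ℝ, τ₀ ≤ τ → exp ((j₀ - τ) / c) / c ≤ exp ((j₁ - τ) / d) / d := by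
    intro τ hτ
    have e1 : exp ((j₀ - τ) / c) / c = exp ((j₀ - τ) / c - Real.log c) := by
      rw [Real.exp_sub, Real.exp_log hc]
    have e2 : exp ((j₁ - τ) / d) / d = exp ((j₁ - τ) / d - Real.log d) := by
      rw [Real.exp_sub, Real.exp_log hd]
    rw [e1, e2]
    apply Real.exp_le_exp.2
    have h2 : 0 ≤ (τ - τ₀) * (d - c) / (c * d) :=
      div_nonneg (mul_nonneg (by linarith) (by linarith)) (by positivity)
    linarith [hdiff_id τ]
  have hsign' : ∀ τ : ℝ, τ ≤ τ₀ → exp ((j₁ - τ) / d) / d ≤ exp ((j₀ - τ) / c) / c := by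
    intro τ hτ
    have e1 : exp ((j₀ - τ) / c) / c = exp ((j₀ - τ) / c - Real.log c) := by
      rw [Real.exp_sub, Real.exp_log hc]
    have e2 : exp ((j₁ - τ) / d) / d = exp ((j₁ - τ) / d - Real.log d) := by
      rw [Real.exp_sub, Real.exp_log hd]
    rw [e1, e2]
    apply Real.exp_le_exp.2
    have h2 : (τ - τ₀) * (d - c) / (c * d) ≤ 0 :=
      div_nonpos_of_nonpos_of_nonneg (mul_nonpos_of_nonpos_of_nonneg (by linarith) (by linarith)) (by positivity)
    linarith [hdiff_id τ]
  -- the third-branch function and its derivative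
  set F : ℝ → ℝ := fun τ => 1 + exp ((j₀ - τ) / c) - exp ((j₁ - τ) / d) with hFdef
  have hFτ : ∀ τ : ℝ, F τ = 1 + exp ((j₀ - τ) / c) - exp ((j₁ - τ) / d) := fun τ => rfl
  have hD : ∀ τ : ℝ, HasDerivAt F (exp ((j₁ - τ) / d) / d - exp ((j₀ - τ) / c) / c) τ := by
    intro τ
    have h1 : HasDerivAt (fun t : ℝ => (j₀ - t) / c) (-1 / c) τ := by
      simpa using ((hasDerivAt_id τ).const_sub j₀).div_const c
    have h2 : HasDerivAt (fun t : ℝ => (j₁ - t) / d) (-1 / d) τ := by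
      simpa using ((hasDerivAt_id τ).const_sub j₁).div_const d
    have e1 := h1.exp
    have e2 := h2.exp
    have h3 := (e1.const_add 1).sub e2
    rw [hFdef]
    convert h3 using 1
    · rfl
    · rfl
    · rfl
    ring
  have hmono : MonotoneOn F (Set.Ici τ₀) := by
    apply monotoneOn_of_deriv_nonneg (convex_Ici τ₀)
    · exact fun x _ => (hD x).differentiableAt.continuousAt.continuousWithinAt
    · exact fun x _ => (hD x).differentiableAt.differentiableWithinAt
    · intro x hx
      rw [interior_Ici] at hx
      rw [(hD x).deriv]
      have := hsign x hx.le
      linarith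
  have hanti : AntitoneOn F (Set.Iic τ₀) := by
    apply antitoneOn_of_deriv_nonpos (convex_Iic τ₀)
    · exact fun x _ => (hD x).differentiableAt.continuousAt.continuousWithinAt
    · exact fun x _ => (hD x).differentiableAt.differentiableWithinAt
    · intro x hx
      rw [interior_Iic] at hx
      rw [(hD x).deriv]
      have := hsign' x hx.le
      linarith
  have hFj₁ : F j₁ = exp ((j₀ - j₁) / c) := by
    rw [hFτ]; simp
  have hexp1 : exp ((j₀ - j₁) / c) ≤ 1 := by
    rw [Real.exp_le_one_iff]
    apply div_nonpos_of_nonpos_of_nonneg (by linarith) hc.le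
  by_cases hcase : j₁ ≥ τ₀
  · rw [if_pos hcase]
    constructor
    · refine ⟨j₁, ?_⟩
      rw [hPE j₁, if_neg (not_lt.2 hj01), if_neg (lt_irrefl j₁)]
      simp
    · rintro y ⟨τ, rfl⟩
      rw [hPE τ]
      split_ifs with h1 h2
      · exact hexp1
      · apply Real.exp_le_exp.2
        gcongr <;> linarith
      · have hτ : j₁ ≤ τ := not_lt.1 h2
        have := hmono hcase (le_trans hcase hτ) hτ
        rw [hFj₁, hFτ] at this
        linarith
  · rw [if_neg hcase]
    have hj₁τ₀ : j₁ ≤ τ₀ := (not_le.1 hcase).le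
    have hkey : F τ₀ ≤ exp ((j₀ - j₁) / c) := by
      have := hanti hj₁τ₀ (le_refl τ₀) hj₁τ₀
      rw [hFj₁] at this
      exact this
    have hFτ₀ : F τ₀ = 1 + exp ((j₀ - τ₀) / c) - exp ((j₁ - τ₀) / d) := hFτ τ₀
    constructor
    · refine ⟨τ₀, ?_⟩
      rw [hPE τ₀, if_neg (not_lt.2 (by linarith)), if_neg (not_lt.2 hj₁τ₀)]
    · rintro y ⟨τ, rfl⟩
      rw [hPE τ]
      split_ifs with h1 h2
      · linarith
      · have : exp ((j₀ - j₁) / c) ≤ exp ((j₀ - τ) / c) := by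
          apply Real.exp_le_exp.2
          gcongr <;> linarith
        linarith
      · have hτ : j₁ ≤ τ := not_lt.1 h2
        rcases le_total τ τ₀ with hle | hge
        · have := hanti hle (le_refl τ₀) hle
          rw [hFτ τ, hFτ τ₀] at this
          linarith
        · have := hmono (le_refl τ₀) hge hge
          rw [hFτ τ, hFτ τ₀] at this
          linarith
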